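/- Let G = (V, E) be a graph and let E1, ..., Es be a partition of E. For each i let Gi = (V, Ei), and suppose there is a time assignment ti on Ei such that the maximum temporal reachability of (Gi, ti) is at most ri. Then there is a time assignment t on E such that the maximum temporal reachability of (G, t) is at most the product r1 · r2 · ... · rs. -/

import Mathlib

variable {V : Type*}

/-- Strict temporal reachability: `TReach G t u v τ` means there is a strict temporal
path from `u` to `v` whose last edge is active at time `τ`. -/
inductive TReach (G : SimpleGraph V) (t : Sym2 V → ℕ) (u : V) : V → ℕ → Prop
  | single {v : V} (h : G.Adj u v) : TReach G t u v (t s(u, v))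
  | cons {v w : V} {τ : ℕ} (h : TReach G t u v τ) (hadj : G.Adj v w)
      (hlt : τ < t s(v, w)) : TReach G t u w (t s(v, w))

/-- The temporal reachability set of `u`: `u` together with all vertices reachable
from `u` by a strict temporal path. -/
def reachSet (G : SimpleGraph V) (t : Sym2 V → ℕ) (u : V) : Set V :=
  {v | v = u ∨ ∃ τ, TReach G t u v τ}

/-- Changing the time assignment in an order-compatible way preserves temporal
reachability on a fixed edge set. -/
lemma treach_congr {E0 : Set (Sym2 V)} {t1 t2 : Sym2 V → ℕ}
    (h12 : ∀ e ∈ E0, ∀ f ∈ E0, t1 e < t1 f → t2 e < t2 f) {u v : V} {τ : ℕ}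
    (h : TReach (SimpleGraph.fromEdgeSet E0) t1 u v τ) :
    ∃ σ, TReach (SimpleGraph.fromEdgeSet E0) t2 u v σ ∧
      ∀ f ∈ E0, τ < t1 f → σ < t2 f := by
  induction h with
  | @single v h =>
      have hm : s(u, v) ∈ E0 := ((SimpleGraph.fromEdgeSet_adj _).mp h).1
      exact ⟨t2 s(u, v), TReach.single h, fun f hf hlt => h12 _ hm _ hf hlt⟩
  | @cons v w τ h hadj hlt ih =>
      obtain ⟨σ, h2, hprop⟩ := ih
      have hm : s(v, w) ∈ E0 := ((SimpleGraph.fromEdgeSet_adj _).mp hadj).1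
      exact ⟨t2 s(v, w), TReach.cons h2 hadj (hprop _ hm hlt),
        fun f hf hlt' => h12 _ hm _ hf hlt'⟩

lemma reachSet_congr_subset {E0 : Set (Sym2 V)} {t1 t2 : Sym2 V → ℕ}
    (h12 : ∀ e ∈ E0, ∀ f ∈ E0, t1 e < t1 f → t2 e < t2 f) (u : V) :
    reachSet (SimpleGraph.fromEdgeSet E0) t1 u ⊆
      reachSet (SimpleGraph.fromEdgeSet E0) t2 u := by
  rintro w (rfl | ⟨τ, hT⟩)
  · exact Or.inl rfl
  · obtain ⟨σ, h2, -⟩ := treach_congr h12 hT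
    exact Or.inr ⟨σ, h2⟩

lemma treach_empty {t : Sym2 V → ℕ} {u v : V} {τ : ℕ} :
    ¬ TReach (SimpleGraph.fromEdgeSet (∅ : Set (Sym2 V))) t u v τ := by
  intro h
  induction h with
  | single h => exact ((SimpleGraph.fromEdgeSet_adj _).mp h).1
  | cons h hadj hlt ih => exact ih

/-- Vertices reachable by concatenating temporal paths in blocks `E' 0, E' 1, …, E' (k-1)`,
in this order. -/
def chainSet (E' : ℕ → Set (Sym2 V)) (t : Sym2 V → ℕ) : ℕ → V → Set V
  | 0, u => {u}
  | (k + 1), u => ⋃ v ∈ chainSet E' t k u, reachSet (SimpleGraph.fromEdgeSet (E' k)) t v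

lemma chainSet_self (E' : ℕ → Set (Sym2 V)) (t : Sym2 V → ℕ) :
    ∀ k u, u ∈ chainSet E' t k u := by
  intro k
  induction k with
  | zero => intro u; exact rfl
  | succ k ih =>
      intro u
      exact Set.mem_biUnion (ih u) (Or.inl rfl)

lemma chainSet_step {E' : ℕ → Set (Sym2 V)} {t : Sym2 V → ℕ} {k : ℕ} {u v w : V}
    (hv : v ∈ chainSet E' t k u)
    (hw : w ∈ reachSet (SimpleGraph.fromEdgeSet (E' k)) t v) :
    w ∈ chainSet E' t (k + 1) u :=
  Set.mem_biUnion hv hw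

lemma chainSet_mono (E' : ℕ → Set (Sym2 V)) (t : Sym2 V → ℕ) {k m : ℕ} (h : k ≤ m)
    (u : V) : chainSet E' t k u ⊆ chainSet E' t m u := by
  induction m with
  | zero => rw [Nat.le_zero.mp h]
  | succ m ih =>
      rcases Nat.lt_or_ge k (m + 1) with hk | hk
      · intro x hx
        exact chainSet_step (ih (Nat.lt_succ_iff.mp hk) hx) (Or.inl rfl)
      · rw [Nat.le_antisymm h hk]

lemma chainSet_card [Fintype V] (E' : ℕ → Set (Sym2 V)) (t : Sym2 V → ℕ) (r' : ℕ → ℕ)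
    (h : ∀ k v, (reachSet (SimpleGraph.fromEdgeSet (E' k)) t v).ncard ≤ r' k) :
    ∀ n u, (chainSet E' t n u).ncard ≤ ∏ k ∈ Finset.range n, r' k := by
  classical
  intro n
  induction n with
  | zero => intro u; simp [chainSet]
  | succ n ih =>
      intro u
      set C : Set V := chainSet E' t n u with hC
      have hCfin : C.Finite := Set.toFinite _
      set F : Finset V := hCfin.toFinset.biUnion
        (fun v => (reachSet (SimpleGraph.fromEdgeSet (E' n)) t v).toFinite.toFinset)
        with hF
      have heq : chainSet E' t (n + 1) u = (F : Set V) := by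
        ext w
        simp only [chainSet, hF, Finset.coe_biUnion, Set.Finite.coe_toFinset,
          Set.mem_iUnion, Finset.mem_coe]
        rfl
      rw [heq, Set.ncard_coe_finset]
      calc F.card ≤ ∑ v ∈ hCfin.toFinset,
            ((reachSet (SimpleGraph.fromEdgeSet (E' n)) t v).toFinite.toFinset).card :=
            Finset.card_biUnion_le
        _ ≤ ∑ _v ∈ hCfin.toFinset, r' n := by
            apply Finset.sum_le_sum
            intro v _
            rw [← Set.ncard_eq_toFinset_card _ (Set.toFinite _)]
            exact h n v
        _ = hCfin.toFinset.card * r' n := by rw [Finset.sum_const, smul_eq_mul]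
        _ = C.ncard * r' n := by rw [Set.ncard_eq_toFinset_card _ hCfin]
        _ ≤ (∏ k ∈ Finset.range n, r' k) * r' n := Nat.mul_le_mul_right _ (ih u)
        _ = ∏ k ∈ Finset.range (n + 1), r' k := (Finset.prod_range_succ _ _).symm

lemma band_eq {M a b x y : ℕ} (hx : x < M) (hy : y < M) (h : M * a + x = M * b + y) :
    a = b ∧ x = y := by
  have key : ∀ a b x y : ℕ, x < M → y < M → M * a + x = M * b + y → b ≤ a := by
    intro a b x y hx hy h
    by_contra hab
    push_neg at hab
    have h1 : M * a + x < M * (a + 1) := by rw [Nat.mul_succ]; omega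
    have h2 : M * (a + 1) ≤ M * b := Nat.mul_le_mul_left M hab
    omega
  have h1 := key a b x y hx hy h
  have h2 := key b a y x hy hx h.symm
  have hab : a = b := le_antisymm h2 h1
  subst hab
  omega

/-- Decomposition of a temporal path into block segments. -/
lemma treach_decomp {G : SimpleGraph V} {t : Sym2 V → ℕ} {E' : ℕ → Set (Sym2 V)}
    {M s : ℕ}
    (hband : ∀ k, ∀ e ∈ E' k, M * k ≤ t e ∧ t e < M * (k + 1))
    (hE : ∀ a b : V, G.Adj a b → ∃ k < s, s(a, b) ∈ E' k)
    {u v : V} {τ : ℕ} (h : TReach G t u v τ) :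
    ∃ k < s, M * k ≤ τ ∧ τ < M * (k + 1) ∧
      ∃ x ∈ chainSet E' t k u, TReach (SimpleGraph.fromEdgeSet (E' k)) t x v τ := by
  induction h with
  | @single v h =>
      obtain ⟨k, hks, hm⟩ := hE _ _ h
      obtain ⟨hb1, hb2⟩ := hband k _ hm
      exact ⟨k, hks, hb1, hb2, u, chainSet_self E' t k u,
        TReach.single ((SimpleGraph.fromEdgeSet_adj _).mpr ⟨hm, h.ne⟩)⟩
  | @cons v w τ h hadj hlt ih =>
      obtain ⟨i, his, hi1, hi2, x, hx, hT⟩ := ih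
      obtain ⟨j, hjs, hm⟩ := hE _ _ hadj
      obtain ⟨hb1, hb2⟩ := hband j _ hm
      have hij : i ≤ j := by
        have h1 : M * i < M * (j + 1) := by omega
        have := lt_of_mul_lt_mul_left h1 (Nat.zero_le M)
        omega
      rcases eq_or_lt_of_le hij with rfl | hlt'
      · exact ⟨i, his, hb1, hb2, x, hx,
          TReach.cons hT ((SimpleGraph.fromEdgeSet_adj _).mpr ⟨hm, hadj.ne⟩) hlt⟩
      · have hv : v ∈ chainSet E' t (i + 1) u :=
          chainSet_step hx (Or.inr ⟨τ, hT⟩)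
        have hv' : v ∈ chainSet E' t j u := chainSet_mono E' t hlt' u hv
        exact ⟨j, hjs, hb1, hb2, v, hv',
          TReach.single ((SimpleGraph.fromEdgeSet_adj _).mpr ⟨hm, hadj.ne⟩)⟩

/-- Lemma: if the edge set of `G` is partitioned into sets `Es i`, each of which admits
a time assignment with maximum temporal reachability at most `r i`, then `G` admits a
time assignment with maximum temporal reachability at most `∏ i, r i`. -/
theorem stmt_7 {V : Type*} [Fintype V] (G : SimpleGraph V) (s : ℕ)
    (Es : Fin s → Set (Sym2 V))
    (hunion : (⋃ i, Es i) = G.edgeSet)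
    (hdisj : ∀ i j : Fin s, i ≠ j → Disjoint (Es i) (Es j))
    (r : Fin s → ℕ)
    (hri : ∀ i : Fin s, ∃ ti : Sym2 V → ℕ, Set.InjOn ti (Es i) ∧
        ∀ v : V, (reachSet (SimpleGraph.fromEdgeSet (Es i)) ti v).ncard ≤ r i) :
    ∃ t : Sym2 V → ℕ, Set.InjOn t G.edgeSet ∧
      ∀ v : V, (reachSet G t v).ncard ≤ ∏ i, r i := by
  classical
  choose T hTinj hTbound using hri
  -- a bound on all relevant time values
  set M : ℕ := 1 + ∑ e ∈ G.edgeFinset, ∑ i, T i e with hM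
  have hsub : ∀ i : Fin s, Es i ⊆ G.edgeSet := by
    intro i
    rw [← hunion]
    exact Set.subset_iUnion Es i
  have hcov : ∀ e ∈ G.edgeSet, ∃ i, e ∈ Es i := by
    intro e he
    rw [← hunion] at he
    exact Set.mem_iUnion.mp he
  choose idx hidx using hcov
  have hTM : ∀ (i : Fin s), ∀ e ∈ G.edgeSet, T i e < M := by
    intro i e he
    have h1 : T i e ≤ ∑ j, T j e :=
      Finset.single_le_sum (f := fun j => T j e) (fun j _ => Nat.zero_le _)
        (Finset.mem_univ i)
    have h2 : ∑ j, T j e ≤ ∑ e ∈ G.edgeFinset, ∑ j, T j e :=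
      Finset.single_le_sum (f := fun e => ∑ j, T j e) (fun _ _ => Nat.zero_le _)
        (SimpleGraph.mem_edgeFinset.mpr he)
    omega
  have hidx_uniq : ∀ (e : Sym2 V) (he : e ∈ G.edgeSet) (i : Fin s),
      e ∈ Es i → idx e he = i := by
    intro e he i hi
    by_contra hne
    exact Set.disjoint_left.mp (hdisj _ _ hne) (hidx e he) hi
  -- the combined time assignment
  set t : Sym2 V → ℕ := fun e =>
    if h : e ∈ G.edgeSet then M * (idx e h : ℕ) + T (idx e h) e else 0 with ht
  have hte : ∀ (i : Fin s), ∀ e ∈ Es i, t e = M * (i : ℕ) + T i e := by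
    intro i e he
    have heG : e ∈ G.edgeSet := hsub i he
    have := hidx_uniq e heG i he
    simp only [ht, dif_pos heG, this]
  -- injectivity
  have hinj : Set.InjOn t G.edgeSet := by
    intro e he f hf hef
    simp only [ht, dif_pos he, dif_pos hf] at hef
    obtain ⟨hab, hxy⟩ := band_eq (hTM _ _ he) (hTM _ _ hf) hef
    have hii : idx e he = idx f hf := Fin.ext hab
    refine hTinj (idx e he) (hidx e he) ?_ ?_
    · rw [hii]; exact hidx f hf
    · rw [hxy, hii]
  -- the blocks, indexed by ℕ
  set E' : ℕ → Set (Sym2 V) := fun k => if h : k < s then Es ⟨k, h⟩ else ∅ with hE'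
  set r' : ℕ → ℕ := fun k => if h : k < s then r ⟨k, h⟩ else 1 with hr'
  have hband : ∀ k, ∀ e ∈ E' k, M * k ≤ t e ∧ t e < M * (k + 1) := by
    intro k e he
    simp only [hE'] at he
    split_ifs at he with hk
    · have hte' := hte ⟨k, hk⟩ e he
      have hT' := hTM ⟨k, hk⟩ e (hsub _ he)
      rw [hte']
      simp only [Fin.val_mk]
      constructor
      · omega
      · have : M * (k + 1) = M * k + M := by ring
        omega
    · exact absurd he (Set.notMem_empty e)
  have hEcov : ∀ a b : V, G.Adj a b → ∃ k < s, s(a, b) ∈ E' k := by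
    intro a b hab
    have heG : s(a, b) ∈ G.edgeSet := (SimpleGraph.mem_edgeSet G).mpr hab
    refine ⟨(idx s(a, b) heG : ℕ), (idx s(a, b) heG).isLt, ?_⟩
    simp only [hE', dif_pos (idx s(a, b) heG).isLt, Fin.eta]
    exact hidx s(a, b) heG
  -- per-block reachability bound for the combined assignment
  have hreach : ∀ k v, (reachSet (SimpleGraph.fromEdgeSet (E' k)) t v).ncard ≤ r' k := by
    intro k v
    by_cases hk : k < s
    · have hsubs : reachSet (SimpleGraph.fromEdgeSet (E' k)) t v ⊆
          reachSet (SimpleGraph.fromEdgeSet (E' k)) (T ⟨k, hk⟩) v := by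
        apply reachSet_congr_subset
        intro e he f hf hlt
        simp only [hE', dif_pos hk] at he hf
        rw [hte ⟨k, hk⟩ e he, hte ⟨k, hk⟩ f hf] at hlt
        omega
      calc (reachSet (SimpleGraph.fromEdgeSet (E' k)) t v).ncard
          ≤ (reachSet (SimpleGraph.fromEdgeSet (E' k)) (T ⟨k, hk⟩) v).ncard :=
            Set.ncard_le_ncard hsubs (Set.toFinite _)
        _ ≤ r' k := by
            simp only [hE', hr', dif_pos hk]
            exact hTbound ⟨k, hk⟩ v
    · have hE'k : E' k = ∅ := by simp [hE', hk]
      have : reachSet (SimpleGraph.fromEdgeSet (E' k)) t v = {v} := by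
        ext w
        constructor
        · rintro (rfl | ⟨τ, hT⟩)
          · rfl
          · rw [hE'k] at hT
            exact absurd hT treach_empty
        · rintro rfl; exact Or.inl rfl
      rw [this, Set.ncard_singleton]
      simp [hr', hk]
  refine ⟨t, hinj, fun v => ?_⟩
  have hsub2 : reachSet G t v ⊆ chainSet E' t s v := by
    rintro w (rfl | ⟨τ, hT⟩)
    · exact chainSet_self E' t s w
    · obtain ⟨k, hks, _, _, x, hx, hTk⟩ := treach_decomp hband hEcov hT
      exact chainSet_mono E' t hks v (chainSet_step hx (Or.inr ⟨τ, hTk⟩))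
  have hprod : ∏ k ∈ Finset.range s, r' k = ∏ i, r i := by
    rw [← Fin.prod_univ_eq_prod_range r' s]
    apply Finset.prod_congr rfl
    intro i _
    simp [hr', i.isLt]
  calc (reachSet G t v).ncard ≤ (chainSet E' t s v).ncard :=
        Set.ncard_le_ncard hsub2 (Set.toFinite _)
    _ ≤ ∏ k ∈ Finset.range s, r' k := chainSet_card E' t r' hreach s v
    _ = ∏ i, r i := hprod
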